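/- If w is a weird number and p is a prime with p > σ(w), then p·w is also weird. -/

import Mathlib

/-- Sum of the positive divisors of `n`. -/
def sigma' (n : ℕ) : ℕ := ∑ d ∈ n.divisors, d

/-- `n` is abundant if `σ(n) > 2n`. -/
def Abundant (n : ℕ) : Prop := 2 * n < sigma' n

/-- `n` is pseudoperfect (in the weak sense) if some subset of its proper divisors sums to `n`. -/
def Pseudoperfect (n : ℕ) : Prop := ∃ s ⊆ n.properDivisors, ∑ d ∈ s, d = n

/-- `n` is weird if it is abundant and no subset of its proper divisors sums to `n`. -/
def Weird (n : ℕ) : Prop := Abundant n ∧ ¬ Pseudoperfect n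

lemma sigma'_eq (n : ℕ) : sigma' n = ArithmeticFunction.sigma 1 n := by
  simp [sigma', ArithmeticFunction.sigma_one_apply]

theorem weird_mul_large_prime (w p : ℕ) (hw : Weird w) (hp : p.Prime)
    (hlarge : sigma' w < p) : Weird (p * w) := by
  obtain ⟨hab, hps⟩ := hw
  have hw0 : w ≠ 0 := by
    rintro rfl
    simp [Abundant, sigma'] at hab
  have hwle : w ≤ sigma' w :=
    Finset.single_le_sum (fun i _ => Nat.zero_le i) (Nat.mem_divisors_self w hw0)
  have hpw : w < p := lt_of_le_of_lt hwle hlarge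
  have hnotdvd : ¬ p ∣ w := fun h => absurd (Nat.le_of_dvd (Nat.pos_of_ne_zero hw0) h)
    (not_le.mpr hpw)
  have hcop : Nat.Coprime p w := (Nat.Prime.coprime_iff_not_dvd hp).mpr hnotdvd
  have hsig : sigma' (p * w) = (p + 1) * sigma' w := by
    rw [sigma'_eq, sigma'_eq, ArithmeticFunction.isMultiplicative_sigma.map_mul_of_coprime hcop]
    congr 1
    rw [ArithmeticFunction.sigma_one_apply, Nat.Prime.divisors hp,
      Finset.sum_pair hp.one_lt.ne]
    omega
  constructor
  · unfold Abundant at *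
    rw [hsig]
    nlinarith
  · rintro ⟨s, hs, hsum⟩
    have hpw0 : p * w ≠ 0 := Nat.mul_ne_zero hp.pos.ne' hw0
    -- split s
    set s0 := s.filter (fun x => ¬ p ∣ x) with hs0def
    set s1 := s.filter (fun x => p ∣ x) with hs1def
    have hsplit : ∑ d ∈ s1, d + ∑ d ∈ s0, d = p * w := by
      rw [← hsum, hs0def, hs1def, Finset.sum_filter_add_sum_filter_not]
    set T := s1.image (· / p) with hTdef
    have hTsum : ∑ d ∈ T, d = ∑ x ∈ s1, x / p := by
      apply Finset.sum_image
      intro x hx y hy hxy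
      obtain ⟨a, rfl⟩ := (Finset.mem_filter.mp hx).2
      obtain ⟨b, rfl⟩ := (Finset.mem_filter.mp hy).2
      dsimp only at hxy
      rw [Nat.mul_div_cancel_left a hp.pos, Nat.mul_div_cancel_left b hp.pos] at hxy
      rw [hxy]
    have hs1sum : ∑ x ∈ s1, x = p * ∑ d ∈ T, d := by
      rw [hTsum, Finset.mul_sum]
      apply Finset.sum_congr rfl
      intro x hx
      obtain ⟨a, rfl⟩ := (Finset.mem_filter.mp hx).2
      rw [Nat.mul_div_cancel_left a hp.pos]
    -- s0 ⊆ divisors of w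
    have hs0sub : s0 ⊆ w.divisors := by
      intro x hx
      have hxs : x ∈ s := Finset.mem_of_mem_filter x hx
      have hxd : x ∣ p * w := (Nat.mem_properDivisors.mp (hs hxs)).1
      have hnp : ¬ p ∣ x := (Finset.mem_filter.mp hx).2
      have hxcop : Nat.Coprime x p := Nat.Coprime.symm ((Nat.Prime.coprime_iff_not_dvd hp).mpr hnp)
      exact Nat.mem_divisors.mpr ⟨hxcop.dvd_of_dvd_mul_left hxd, hw0⟩
    have hs0le : ∑ d ∈ s0, d ≤ sigma' w :=
      Finset.sum_le_sum_of_subset hs0sub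
    have hdvd0 : p ∣ ∑ d ∈ s0, d := by
      have h1 : p ∣ ∑ d ∈ s1, d + ∑ d ∈ s0, d := hsplit ▸ dvd_mul_right p w
      have h2 : p ∣ ∑ d ∈ s1, d := hs1sum ▸ dvd_mul_right p _
      exact (Nat.dvd_add_right h2).mp h1
    have hzero : ∑ d ∈ s0, d = 0 :=
      Nat.eq_zero_of_dvd_of_lt hdvd0 (lt_of_le_of_lt hs0le hlarge)
    have hTw : ∑ d ∈ T, d = w := by
      have : p * ∑ d ∈ T, d = p * w := by omega
      exact Nat.eq_of_mul_eq_mul_left hp.pos this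
    apply hps
    refine ⟨T, ?_, hTw⟩
    intro d hd
    obtain ⟨x, hx, rfl⟩ := Finset.mem_image.mp hd
    have hxs : x ∈ s := Finset.mem_of_mem_filter x hx
    have hpx : p ∣ x := (Finset.mem_filter.mp hx).2
    have hxp := Nat.mem_properDivisors.mp (hs hxs)
    obtain ⟨d, rfl⟩ := hpx
    rw [Nat.mul_div_cancel_left d hp.pos]
    have hddvd : d ∣ w := (mul_dvd_mul_iff_left hp.pos.ne').mp hxp.1
    refine Nat.mem_properDivisors.mpr ⟨hddvd, ?_⟩
    have : d ≤ w := Nat.le_of_dvd (Nat.pos_of_ne_zero hw0) hddvd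
    have hne : d ≠ w := fun h => hxp.2.ne (by rw [h])
    omega
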